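/- Let s > 1, δ ∈ (0,1), 0 < σ ≤ (1−δ)/s, and 0 < τ' < τ. Let K > 1 and let ξ, η ∈ ℝ^d satisfy |η| ≤ |ξ − η|/K. Then exp( τ'⟨ξ⟩^σ − τ⟨η⟩^σ − τ⟨ξ⟩^{−δ/s}⟨ξ−η⟩^{1/s} ) ≤ exp( −( τ − (K^σ − (K−1)^σ)·τ' )·⟨η⟩^σ ) · exp( −( τ·(1 + 1/K)^{−δ/s} − τ' )·⟨ξ−η⟩^{(1−δ)/s} ). -/

import Mathlib

open MeasureTheory Real
open scoped FourierTransform ENNReal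

noncomputable section

/-- `ℝ^d` as a Euclidean space. -/
abbrev E (d : ℕ) := EuclideanSpace ℝ (Fin d)

/-- The Japanese bracket `⟨ξ⟩ = (1 + |ξ|²)^{1/2}`. -/
def jap {d : ℕ} (ξ : E d) : ℝ := Real.sqrt (1 + ‖ξ‖ ^ 2)

lemma aux_anti {σ h : ℝ} (hσ0 : 0 < σ) (hσ1 : σ ≤ 1) (hh : 0 ≤ h) :
    AntitoneOn (fun x : ℝ => (x + h) ^ σ - x ^ σ) (Set.Ici 0) := by
  have hderiv : ∀ x ∈ interior (Set.Ici (0:ℝ)),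
      HasDerivAt (fun x : ℝ => (x + h) ^ σ - x ^ σ)
        (σ * (x + h) ^ (σ - 1) - σ * x ^ (σ - 1)) x := by
    intro x hx
    rw [interior_Ici] at hx
    have hx0 : (0:ℝ) < x := hx
    have h1 : HasDerivAt (fun x : ℝ => (x + h) ^ σ) (σ * (x + h) ^ (σ - 1)) x := by
      have := (Real.hasDerivAt_rpow_const (x := x + h) (p := σ)
        (Or.inl (by positivity))).comp x ((hasDerivAt_id x).add_const h)
      simpa [Function.comp_def] using this
    exact h1.sub (Real.hasDerivAt_rpow_const (Or.inl hx0.ne'))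
  apply antitoneOn_of_deriv_nonpos (convex_Ici 0)
  · exact (((Real.continuous_rpow_const hσ0.le).comp (continuous_id.add continuous_const)).sub
      (Real.continuous_rpow_const hσ0.le)).continuousOn
  · exact fun x hx => (hderiv x hx).differentiableAt.differentiableWithinAt
  · intro x hx
    rw [(hderiv x hx).deriv]
    have hx0 : (0:ℝ) < x := by rwa [interior_Ici] at hx
    have : (x + h) ^ (σ - 1) ≤ x ^ (σ - 1) :=
      Real.rpow_le_rpow_of_nonpos hx0 (by linarith) (by linarith)
    nlinarith


lemma one_le_jap {d : ℕ} (ξ : E d) : 1 ≤ jap ξ := by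
  rw [jap, Real.one_le_sqrt]
  nlinarith [sq_nonneg ‖ξ‖]

lemma norm_le_jap {d : ℕ} (ξ : E d) : ‖ξ‖ ≤ jap ξ := by
  rw [jap, Real.le_sqrt (norm_nonneg ξ) (by positivity)]
  linarith

lemma jap_lip {d : ℕ} (ξ η : E d) : jap ξ ≤ jap (ξ - η) + ‖η‖ := by
  have h1 : ‖ξ‖ ≤ ‖ξ - η‖ + ‖η‖ := by
    simpa using norm_add_le (ξ - η) η
  have h2 : jap ξ ≤ Real.sqrt (1 + (‖ξ - η‖ + ‖η‖) ^ 2) :=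
    Real.sqrt_le_sqrt (by nlinarith [norm_nonneg ξ])
  refine h2.trans ?_
  rw [show jap (ξ - η) + ‖η‖ = Real.sqrt ((jap (ξ - η) + ‖η‖) ^ 2) by
    rw [Real.sqrt_sq (by nlinarith [norm_nonneg η, one_le_jap (ξ - η)])]]
  apply Real.sqrt_le_sqrt
  have hb : ‖ξ - η‖ ≤ jap (ξ - η) := norm_le_jap _
  have hb2 : (jap (ξ - η)) ^ 2 = 1 + ‖ξ - η‖ ^ 2 := Real.sq_sqrt (by positivity)
  nlinarith [norm_nonneg η, norm_nonneg (ξ - η)]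

set_option maxHeartbeats 1000000 in
/-- Estimate of the exponential weight in the region
`|η| ≤ |ξ−η|/K` (high-frequency symbol region). -/
theorem stmt_13 (s δ σ τ' τ K : ℝ) (hs : 1 < s) (hδ0 : 0 < δ) (hδ1 : δ < 1)
    (hσ0 : 0 < σ) (hσ : σ ≤ (1 - δ) / s) (hτ'0 : 0 < τ') (hτ'τ : τ' < τ) (hK : 1 < K)
    (d : ℕ) (ξ η : E d) (h : ‖η‖ ≤ ‖ξ - η‖ / K) :
    Real.exp (τ' * jap ξ ^ σ - τ * jap η ^ σ
        - τ * jap ξ ^ (-(δ / s)) * jap (ξ - η) ^ (1 / s))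
      ≤ Real.exp (-(τ - (K ^ σ - (K - 1) ^ σ) * τ') * jap η ^ σ) *
        Real.exp (-(τ * (1 + 1 / K) ^ (-(δ / s)) - τ') * jap (ξ - η) ^ ((1 - δ) / s)) := by
  set a := jap η with ha
  set b := jap (ξ - η) with hb
  set c := jap ξ with hc
  set r := ‖η‖ with hr
  have hs0 : (0:ℝ) < s := by linarith
  have ha1 : 1 ≤ a := one_le_jap η
  have hb1 : 1 ≤ b := one_le_jap (ξ - η)
  have hc1 : 1 ≤ c := one_le_jap ξ
  have ha0 : 0 < a := by linarith
  have hb0 : 0 < b := by linarith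
  have hc0 : 0 < c := by linarith
  have hr0 : 0 ≤ r := norm_nonneg η
  have hra : r ≤ a := norm_le_jap η
  have hrb : K * r ≤ b := by
    have : ‖ξ - η‖ ≤ b := norm_le_jap (ξ - η)
    have hK0 : (0:ℝ) < K := by linarith
    rw [le_div_iff₀ hK0] at h
    nlinarith
  have hcb : c ≤ b + r := jap_lip ξ η
  have hK0 : (0:ℝ) < K := by linarith
  have hcb2 : c ≤ (1 + 1 / K) * b := by
    have : r ≤ b / K := by rw [le_div_iff₀ hK0]; linarith
    have : r ≤ b * (1 / K) := by rw [mul_one_div]; exact this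
    nlinarith
  have hσ1 : σ ≤ 1 := by
    refine hσ.trans ?_
    rw [div_le_one hs0]; linarith
  -- Step 1
  have step1 : c ^ σ ≤ (K ^ σ - (K - 1) ^ σ) * a ^ σ + b ^ ((1 - δ) / s) := by
    have u1 : c ^ σ ≤ (b + r) ^ σ :=
      Real.rpow_le_rpow hc0.le hcb hσ0.le
    have u2 : (b + r) ^ σ - b ^ σ ≤ (K * r + r) ^ σ - (K * r) ^ σ := by
      have := aux_anti hσ0 hσ1 hr0 (Set.mem_Ici.2 (by positivity)) (Set.mem_Ici.2 (by linarith : (0:ℝ) ≤ b)) hrb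
      simpa using this
    have u3 : (K * r + r) ^ σ = (K + 1) ^ σ * r ^ σ := by
      rw [show K * r + r = (K + 1) * r by ring, Real.mul_rpow (by linarith) hr0]
    have u4 : (K * r) ^ σ = K ^ σ * r ^ σ := Real.mul_rpow hK0.le hr0
    have u5 : (K + 1) ^ σ - K ^ σ ≤ K ^ σ - (K - 1) ^ σ := by
      have := aux_anti hσ0 hσ1 (zero_le_one) (Set.mem_Ici.2 (by linarith : (0:ℝ) ≤ K - 1)) (Set.mem_Ici.2 (by linarith : (0:ℝ) ≤ K)) (by linarith)
      simpa [show K - 1 + 1 = K by ring] using this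
    have u6 : r ^ σ ≤ a ^ σ := Real.rpow_le_rpow hr0 hra hσ0.le
    have u6' : (K - 1) ^ σ ≤ K ^ σ := Real.rpow_le_rpow (by linarith) (by linarith) hσ0.le
    have u6'' : K ^ σ ≤ (K + 1) ^ σ := Real.rpow_le_rpow (by linarith) (by linarith) hσ0.le
    have u7 : b ^ σ ≤ b ^ ((1 - δ) / s) := Real.rpow_le_rpow_of_exponent_le hb1 hσ
    have u8 : 0 ≤ r ^ σ := Real.rpow_nonneg hr0 σ
    nlinarith
  -- Step 2
  have step2 : (1 + 1 / K) ^ (-(δ / s)) * b ^ ((1 - δ) / s) ≤ c ^ (-(δ / s)) * b ^ (1 / s) := by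
    have hz : -(δ / s) ≤ 0 := neg_nonpos.2 (by positivity)
    have w1 : ((1 + 1 / K) * b) ^ (-(δ / s)) ≤ c ^ (-(δ / s)) :=
      Real.rpow_le_rpow_of_nonpos hc0 hcb2 hz
    rw [Real.mul_rpow (by positivity) hb0.le] at w1
    have w3 : b ^ ((1 - δ) / s) = b ^ (-(δ / s)) * b ^ (1 / s) := by
      rw [← Real.rpow_add hb0]
      congr 1
      field_simp
      ring
    rw [w3, ← mul_assoc]
    have hbs : 0 ≤ b ^ (1 / s) := Real.rpow_nonneg hb0.le _
    exact mul_le_mul_of_nonneg_right w1 hbs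
  rw [← Real.exp_add, Real.exp_le_exp]
  have m1 : τ' * c ^ σ ≤ τ' * ((K ^ σ - (K - 1) ^ σ) * a ^ σ + b ^ ((1 - δ) / s)) :=
    mul_le_mul_of_nonneg_left step1 hτ'0.le
  have m2 : τ * ((1 + 1 / K) ^ (-(δ / s)) * b ^ ((1 - δ) / s)) ≤ τ * (c ^ (-(δ / s)) * b ^ (1 / s)) :=
    mul_le_mul_of_nonneg_left step2 (by linarith)
  nlinarith [m1, m2]
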